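/- For all real α > -1/2, the integral I₂(α) = ∫_{-1/2}^{1/2} (φ₊^{(α,1)}(t))² dt equals (1/2)(1 − Γ(2α+2)Γ(α+3/2)² / (Γ(2α+5/2)Γ(α+1)Γ(α+2)√π)), where φ₊^{(α,1)}(t) = 1/2 + 𝒦 ∑_{k=0}^∞ C(α,k)(-1)^k (2t)^{2k+1}/(2k+1) with 𝒦 = Γ(α+3/2)/(√π Γ(α+1)). -/

import Mathlib

/-- Generalized binomial coefficient `C(α,k) = (1/k!)·∏_{r<k}(α-r)`. -/
noncomputable def genBinom (α : ℝ) (k : ℕ) : ℝ :=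
  (∏ r ∈ Finset.range k, (α - r)) / (Nat.factorial k)

/-- The ultraspherical profile function `φ₊^{(α,1)}` given by its power series. -/
noncomputable def phiPlus (α t : ℝ) : ℝ :=
  1/2 + (Real.Gamma (α + 3/2) / (Real.sqrt Real.pi * Real.Gamma (α + 1))) *
    ∑' k : ℕ, genBinom α k * (-1) ^ k * (2 * t) ^ (2 * k + 1) / (2 * k + 1)

namespace S11
open Real Set MeasureTheory intervalIntegral

lemma genBinom_zero (α : ℝ) : genBinom α 0 = 1 := by simp [genBinom]

lemma genBinom_succ (α : ℝ) (k : ℕ) :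
    ((k:ℝ)+1) * genBinom α (k+1) = (α - k) * genBinom α k := by
  unfold genBinom
  rw [Finset.prod_range_succ, Nat.factorial_succ]
  push_cast
  have h2 : (Nat.factorial k : ℝ) ≠ 0 := by positivity
  field_simp

lemma genBinom_succ' (α : ℝ) (k : ℕ) :
    genBinom α (k+1) = (α - k) * genBinom α k / ((k:ℝ)+1) := by
  have h := genBinom_succ α k
  field_simp
  linarith [h]

lemma genBinom_abs_le (α : ℝ) (m : ℕ) (hm : |α| ≤ m) (k : ℕ) :
    |genBinom α k| ≤ ((k:ℝ)+1)^m := by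
  induction k with
  | zero => simp [genBinom_zero]
  | succ k ih =>
    have hk1 : (0:ℝ) < (k:ℝ)+1 := by positivity
    have h1 : |genBinom α (k+1)| = |α - k| / ((k:ℝ)+1) * |genBinom α k| := by
      rw [genBinom_succ', abs_div, abs_mul, abs_of_pos hk1]; ring
    have h2 : |α - k| ≤ (m:ℝ) + k := by
      calc |α - k| ≤ |α| + |(k:ℝ)| := abs_sub _ _
        _ ≤ (m:ℝ) + k := by rw [abs_of_nonneg (by positivity : (0:ℝ) ≤ (k:ℝ))]; linarith
    have hB : 1 + (m:ℝ) * (1/((k:ℝ)+1)) ≤ (1 + 1/((k:ℝ)+1))^m := by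
      apply one_add_mul_le_pow
      have : (0:ℝ) < 1/((k:ℝ)+1) := by positivity
      linarith
    have hb : ((m:ℝ)+k) * ((k:ℝ)+1)^m ≤ ((k:ℝ)+2)^m * ((k:ℝ)+1) := by
      have he : ((k:ℝ)+2)^m = ((k:ℝ)+1)^m * (1 + 1/((k:ℝ)+1))^m := by
        rw [← mul_pow]; congr 1; field_simp; ring
      rw [he]
      have h3 : ((m:ℝ)+k) ≤ (1 + (m:ℝ) * (1/((k:ℝ)+1))) * ((k:ℝ)+1) := by
        field_simp; linarith
      calc ((m:ℝ)+k) * ((k:ℝ)+1)^m ≤ ((1 + (m:ℝ) * (1/((k:ℝ)+1))) * ((k:ℝ)+1)) * ((k:ℝ)+1)^m := by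
            apply mul_le_mul_of_nonneg_right h3 (by positivity)
        _ ≤ ((1 + 1/((k:ℝ)+1))^m * ((k:ℝ)+1)) * ((k:ℝ)+1)^m := by
            have := mul_le_mul_of_nonneg_right hB (le_of_lt hk1)
            nlinarith [pow_pos hk1 m]
        _ = ((k:ℝ)+1)^m * (1 + 1/((k:ℝ)+1))^m * ((k:ℝ)+1) := by ring
    have key : |genBinom α (k+1)| ≤ ((k:ℝ)+2)^m := by
      rw [h1, div_mul_eq_mul_div]
      rw [div_le_iff₀ hk1]
      calc |α - k| * |genBinom α k| ≤ ((m:ℝ)+k) * ((k:ℝ)+1)^m := by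
            apply mul_le_mul h2 ih (abs_nonneg _) (by positivity)
        _ ≤ ((k:ℝ)+2)^m * ((k:ℝ)+1) := hb
    have : ((k+1:ℕ):ℝ) + 1 = (k:ℝ)+2 := by push_cast; ring
    rw [this]; exact key

lemma summable_aux (p : ℕ) {r : ℝ} (h0 : 0 ≤ r) (hr : r < 1) :
    Summable (fun k : ℕ => ((k:ℝ)+1)^p * r^k) := by
  rcases eq_or_lt_of_le h0 with h|h
  · apply summable_of_ne_finset_zero (s := {0})
    intro k hk
    simp only [Finset.mem_singleton] at hk
    rw [← h, zero_pow hk, mul_zero]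
  · have hs : Summable (fun n : ℕ => (n:ℝ)^p * r^n) :=
      summable_pow_mul_geometric_of_norm_lt_one p (by rwa [Real.norm_eq_abs, abs_of_pos h])
    have hs1 : Summable (fun n : ℕ => ((n+1:ℕ):ℝ)^p * r^(n+1)) :=
      (summable_nat_add_iff 1).mpr hs
    have := hs1.mul_left (1/r)
    apply this.congr
    intro n
    push_cast
    field_simp
    ring

/-- master summability: `|genBinom α k| * (k+1)^j * r^k` is summable for `0 ≤ r < 1`. -/
lemma summable_coeff (α : ℝ) (j : ℕ) {r : ℝ} (h0 : 0 ≤ r) (hr : r < 1) :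
    Summable (fun k : ℕ => |genBinom α k| * ((k:ℝ)+1)^j * r^k) := by
  obtain ⟨m, hm⟩ : ∃ m : ℕ, |α| ≤ m := ⟨⌈|α|⌉₊, Nat.le_ceil _⟩
  refine Summable.of_nonneg_of_le (fun k => by positivity) (fun k => ?_)
    (summable_aux (m+j) h0 hr)
  · 
    have h1 : |genBinom α k| ≤ ((k:ℝ)+1)^m := genBinom_abs_le α m hm k
    have : ((k:ℝ)+1)^(m+j) = ((k:ℝ)+1)^m * ((k:ℝ)+1)^j := pow_add _ _ _
    rw [this]
    have hk : (0:ℝ) ≤ (k:ℝ)+1 := by positivity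
    apply mul_le_mul_of_nonneg_right _ (pow_nonneg h0 k)
    apply mul_le_mul_of_nonneg_right h1 (by positivity)

/-- helper: deduce `f x = f 0` from zero derivative on `Ioo (-c) c`. -/
lemma const_of_deriv_zero {f : ℝ → ℝ} {c : ℝ} (hc : 0 < c)
    (hd : ∀ y ∈ Set.Ioo (-c) c, HasDerivAt f 0 y) {x : ℝ} (hx : |x| < c) :
    f x = f 0 := by
  have hsub : ∀ a b : ℝ, -c < a → b < c → Set.Icc a b ⊆ Set.Ioo (-c) c := by
    intro a b ha hb z hz
    exact ⟨lt_of_lt_of_le ha hz.1, lt_of_le_of_lt hz.2 hb⟩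
  rcases le_or_gt 0 x with h|h
  · have h1 : Set.Icc (0:ℝ) x ⊆ Set.Ioo (-c) c :=
      hsub 0 x (by linarith) (by rwa [abs_of_nonneg h] at hx)
    have := constant_of_has_deriv_right_zero (f := f) (a := 0) (b := x)
      (fun z hz => ((hd z (h1 hz)).continuousAt).continuousWithinAt)
      (fun z hz => ((hd z (h1 (Set.mem_Icc_of_Ico hz))).hasDerivWithinAt))
    exact this x (Set.right_mem_Icc.mpr h)
  · have hx' : -c < x := by
      rw [abs_of_neg h] at hx; linarith
    have h1 : Set.Icc x (0:ℝ) ⊆ Set.Ioo (-c) c := hsub x 0 hx' (by linarith)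
    have := constant_of_has_deriv_right_zero (f := f) (a := x) (b := 0)
      (fun z hz => ((hd z (h1 hz)).continuousAt).continuousWithinAt)
      (fun z hz => ((hd z (h1 (Set.mem_Icc_of_Ico hz))).hasDerivWithinAt))
    exact (this 0 (Set.right_mem_Icc.mpr (le_of_lt h))).symm

lemma summable_pow_series (α : ℝ) {x : ℝ} (hx : |x| < 1) (j : ℕ) :
    Summable (fun k : ℕ => |genBinom α k| * ((k:ℝ)+1)^j * |x|^k) :=
  summable_coeff α j (abs_nonneg x) hx

lemma hasDerivAt_binomF (α : ℝ) {y : ℝ} (hy : |y| < 1) :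
    HasDerivAt (fun x : ℝ => ∑' k : ℕ, genBinom α k * x ^ k)
      (∑' k : ℕ, genBinom α k * ((k:ℕ) * y ^ (k-1))) y := by
  set r : ℝ := (1 + |y|)/2 with hrdef
  have hr0 : 0 < r := by positivity
  have hyr : |y| < r := by rw [hrdef]; linarith
  have hr1 : r < 1 := by rw [hrdef]; linarith
  apply hasDerivAt_tsum_of_isPreconnected
    (g' := fun (k : ℕ) (x : ℝ) => genBinom α k * ((k:ℕ) * x ^ (k-1)))
    (u := fun k : ℕ => |genBinom α k| * (((k:ℝ)+1) * r^(k-1)))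
    (t := Set.Ioo (-r) r) (y₀ := 0)
  · -- summability of u
    have h2 : Summable (fun k : ℕ => (1/r) * (|genBinom α k| * ((k:ℝ)+1)^1 * r^k)) :=
      (summable_coeff α 1 (le_of_lt hr0) hr1).mul_left _
    apply h2.of_nonneg_of_le (fun k => by positivity)
    intro k
    rcases Nat.eq_zero_or_pos k with h|h
    · subst h
      have h1r : (1:ℝ) ≤ r⁻¹ := by rw [← one_div, le_div_iff₀ hr0]; linarith
      simp
      nlinarith [abs_nonneg (genBinom α 0)]

    · have : r ^ (k-1) = r^k / r := by
        rw [eq_div_iff (ne_of_gt hr0), ← pow_succ]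
        congr 1
        omega
      rw [this]
      rw [pow_one]
      have := pow_nonneg (le_of_lt hr0) k
      rw [div_eq_mul_one_div]
      calc |genBinom α k| * (((k:ℝ)+1) * (r^k * (1/r)))
          = 1/r * (|genBinom α k| * ((k:ℝ)+1) * r^k) := by ring
        _ ≤ 1/r * (|genBinom α k| * ((k:ℝ)+1) * r^k) := le_refl _
  · exact isOpen_Ioo
  · exact (convex_Ioo _ _).isPreconnected
  · intro k z hz
    exact (hasDerivAt_pow k z).const_mul (genBinom α k)
  · intro k z hz
    have hz' : |z| ≤ r := by
      rw [abs_le]; exact ⟨le_of_lt hz.1, le_of_lt hz.2⟩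
    rw [Real.norm_eq_abs, abs_mul, abs_mul]
    apply mul_le_mul_of_nonneg_left _ (abs_nonneg _)
    rw [abs_pow]
    have h1 : |(k:ℝ)| ≤ (k:ℝ)+1 := by rw [abs_of_nonneg (Nat.cast_nonneg k)]; linarith
    have h2 : |z|^(k-1) ≤ r^(k-1) := pow_le_pow_left₀ (abs_nonneg z) hz' _
    exact mul_le_mul h1 h2 (by positivity) (by positivity)
  · exact ⟨by linarith, by linarith⟩
  · -- summable at 0
    apply summable_of_ne_finset_zero (s := {0})
    intro k hk
    simp only [Finset.mem_singleton] at hk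
    rw [zero_pow hk, mul_zero]
  · exact ⟨neg_lt_of_abs_lt hyr, lt_of_abs_lt hyr⟩

lemma summable_binom_mul_pow (α : ℝ) {x : ℝ} (hx : |x| < 1) :
    Summable (fun k : ℕ => genBinom α k * x ^ k) := by
  apply Summable.of_abs
  apply (summable_pow_series α hx 0).of_nonneg_of_le (fun k => abs_nonneg _)
  intro k
  rw [abs_mul, abs_pow, pow_zero, mul_one]

lemma summable_binom_mul_nat_pow (α : ℝ) {x : ℝ} (hx : |x| < 1) :
    Summable (fun k : ℕ => (k:ℝ) * genBinom α k * x ^ k) := by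
  apply Summable.of_abs
  apply (summable_pow_series α hx 1).of_nonneg_of_le (fun k => abs_nonneg _)
  intro k
  rw [abs_mul, abs_mul, abs_pow, pow_one]
  have : |(k:ℝ)| ≤ (k:ℝ)+1 := by rw [abs_of_nonneg (Nat.cast_nonneg k)]; linarith
  calc |(k:ℝ)| * |genBinom α k| * |x|^k ≤ ((k:ℝ)+1) * |genBinom α k| * |x|^k := by
        apply mul_le_mul_of_nonneg_right _ (by positivity)
        apply mul_le_mul_of_nonneg_right this (abs_nonneg _)
    _ = |genBinom α k| * ((k:ℝ)+1) * |x|^k := by ring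


/-- The generalized binomial series. -/
lemma binomial_tsum (α : ℝ) {x : ℝ} (hx : |x| < 1) :
    ∑' k : ℕ, genBinom α k * x ^ k = (1+x) ^ α := by
  set F : ℝ → ℝ := fun x => ∑' k : ℕ, genBinom α k * x ^ k with hF
  have hsum_nat : ∀ y : ℝ, |y| < 1 → Summable (fun k : ℕ => (k:ℝ) * genBinom α k * y ^ k) :=
    fun y hy => summable_binom_mul_nat_pow α hy
  have hS0 : ∀ y : ℝ, |y| < 1 → Summable (fun k : ℕ => genBinom α k * ((k:ℕ) * y ^ (k-1))) := by
    intro y hy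
    rcases eq_or_ne y 0 with h0|h0
    · subst h0
      apply summable_of_ne_finset_zero (s := ({0,1} : Finset ℕ))
      intro k hk
      simp only [Finset.mem_insert, Finset.mem_singleton] at hk
      push_neg at hk
      rw [zero_pow (by omega : k - 1 ≠ 0), mul_zero, mul_zero]
    · apply Summable.of_abs
      apply ((summable_pow_series α hy 1).mul_left (1/|y|)).of_nonneg_of_le
        (fun k => abs_nonneg _)
      intro k
      rcases Nat.eq_zero_or_pos k with h|h
      · subst h; simp; positivity
      have hpow : |y| ^ (k-1) = |y|^k / |y| := by
        rw [eq_div_iff (abs_ne_zero.mpr h0), ← pow_succ]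
        congr 1; omega
      rw [abs_mul, abs_mul, abs_pow, hpow]
      have hk1 : |(k:ℝ)| ≤ (k:ℝ)+1 := by rw [abs_of_nonneg (Nat.cast_nonneg k)]; linarith
      have hy0 : 0 < |y| := abs_pos.mpr h0
      calc |genBinom α k| * (|(k:ℝ)| * (|y|^k / |y|))
          ≤ |genBinom α k| * (((k:ℝ)+1) * (|y|^k / |y|)) := by
            apply mul_le_mul_of_nonneg_left _ (abs_nonneg _)
            apply mul_le_mul_of_nonneg_right hk1 (by positivity)
        _ = 1/|y| * (|genBinom α k| * ((k:ℝ)+1)^1 * |y|^k) := by rw [pow_one]; field_simp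
  -- the ODE : (1+y) * F'(y) = α F(y)
  have key : ∀ y : ℝ, |y| < 1 →
      (1+y) * (∑' k : ℕ, genBinom α k * ((k:ℕ) * y ^ (k-1))) = α * F y := by
    intro y hy
    set A := ∑' k : ℕ, genBinom α k * ((k:ℕ) * y ^ (k-1)) with hA
    set T := ∑' k : ℕ, (k:ℝ) * genBinom α k * y ^ k with hT
    have hTs := hsum_nat y hy
    have hFs := summable_binom_mul_pow α hy
    have hdrop : A = ∑' k : ℕ, genBinom α (k+1) * (((k:ℝ)+1) * y ^ k) := by
      rw [hA, (hS0 y hy).tsum_eq_zero_add]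
      simp only [Nat.cast_zero, zero_mul, mul_zero, zero_add]
      apply tsum_congr
      intro k
      rw [Nat.add_sub_cancel]
      push_cast
      ring
    have hrec : ∀ k : ℕ, genBinom α (k+1) * (((k:ℝ)+1) * y ^ k)
        = α * (genBinom α k * y^k) - (k:ℝ) * genBinom α k * y^k := by
      intro k
      have h := genBinom_succ α k
      calc genBinom α (k+1) * (((k:ℝ)+1) * y ^ k)
          = (((k:ℝ)+1) * genBinom α (k+1)) * y^k := by ring
        _ = ((α - k) * genBinom α k) * y^k := by rw [h]
        _ = α * (genBinom α k * y^k) - (k:ℝ) * genBinom α k * y^k := by ring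
    have hA_eq : A = α * F y - T := by
      rw [hdrop]
      have h1 : Summable (fun k : ℕ => α * (genBinom α k * y^k)) := hFs.mul_left α
      calc (∑' k : ℕ, genBinom α (k+1) * (((k:ℝ)+1) * y ^ k))
          = ∑' k : ℕ, (α * (genBinom α k * y^k) - (k:ℝ) * genBinom α k * y^k) :=
            tsum_congr hrec
        _ = (∑' k : ℕ, α * (genBinom α k * y^k)) - T := h1.tsum_sub hTs
        _ = α * F y - T := by rw [tsum_mul_left]
    have hyA : y * A = T := by
      rw [hA, hT, ← tsum_mul_left]
      apply tsum_congr
      intro k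
      rcases Nat.eq_zero_or_pos k with h|h
      · subst h; simp
      · have : y^(k-1) * y = y^k := by
          rw [← pow_succ]; congr 1; omega
        calc y * (genBinom α k * ((k:ℝ) * y ^ (k-1)))
            = (k:ℝ) * genBinom α k * (y^(k-1) * y) := by ring
          _ = (k:ℝ) * genBinom α k * y^k := by rw [this]
    calc (1+y) * A = A + y * A := by ring
      _ = (α * F y - T) + T := by rw [hyA, hA_eq]
      _ = α * F y := by ring
  -- h z := F z * (1+z)^(-α) has zero derivative
  have hder : ∀ y : ℝ, y ∈ Set.Ioo (-1:ℝ) 1 →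
      HasDerivAt (fun z => F z * (1+z) ^ (-α)) 0 y := by
    intro y hy
    have hy' : |y| < 1 := abs_lt.mpr ⟨hy.1, hy.2⟩
    have h1y : (0:ℝ) < 1 + y := by linarith [hy.1]
    have hF' := hasDerivAt_binomF α hy'
    have hg : HasDerivAt (fun z : ℝ => (1+z) ^ (-α)) (1 * (-α) * (1+y)^(-α-1)) y := by
      apply HasDerivAt.rpow_const ((hasDerivAt_id y).const_add 1)
      exact Or.inl (ne_of_gt h1y)
    have := hF'.mul hg
    refine this.congr_deriv ?_
    set A := ∑' k : ℕ, genBinom α k * ((k:ℕ) * y ^ (k-1)) with hA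
    have hkey := key y hy'
    have hrw : (1+y) ^ (-α) = (1+y)^(-α-1) * (1+y) := by
      rw [← Real.rpow_add_one (ne_of_gt h1y)]
      congr 1; ring
    have hne : (1+y)^(-α-1) ≠ 0 := ne_of_gt (Real.rpow_pos_of_pos h1y _)
    show A * ((1+y)^(-α)) + F y * (1 * (-α) * (1+y)^(-α-1)) = 0
    rw [hrw]
    have : A * ((1+y)^(-α-1) * (1+y)) + F y * (1 * (-α) * (1+y)^(-α-1))
        = (1+y)^(-α-1) * ((1+y) * A - α * F y) := by ring
    rw [this, hkey]
    ring
  have hconst := const_of_deriv_zero (by norm_num : (0:ℝ) < 1) hder hx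
  have hF0 : F 0 = 1 := by
    show (∑' k : ℕ, genBinom α k * (0:ℝ) ^ k) = 1
    rw [tsum_eq_single 0]
    · simp [genBinom_zero]
    · intro k hk
      rw [zero_pow hk, mul_zero]
  have h0v : F 0 * (1+0:ℝ) ^ (-α) = 1 := by
    rw [hF0]; norm_num
  have hx1 : (0:ℝ) < 1 + x := by
    have := neg_lt_of_abs_lt hx; linarith
  have hmain : F x * (1+x) ^ (-α) = 1 := by rw [hconst, h0v]
  have hne : (1+x:ℝ)^α ≠ 0 := ne_of_gt (Real.rpow_pos_of_pos hx1 α)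
  have hinv : (1+x:ℝ) ^ (-α) = ((1+x)^α)⁻¹ := Real.rpow_neg (le_of_lt hx1) α
  rw [hinv] at hmain
  field_simp at hmain
  exact hmain
/-! ### The weight function and its primitive -/

noncomputable def wf (α : ℝ) (t : ℝ) : ℝ := (1 - 4*t^2) ^ α

noncomputable def gf (α : ℝ) (t : ℝ) : ℝ := ∫ u in (0:ℝ)..t, wf α u

lemma wf_even (α t : ℝ) : wf α (-t) = wf α t := by unfold wf; ring_nf

lemma w_tsum (α : ℝ) {t : ℝ} (ht : |t| < 1/2) :
    ∑' k : ℕ, genBinom α k * (-1)^k * (2*t)^(2*k) = wf α t := by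
  have hx : |(-(4*t^2) : ℝ)| < 1 := by
    rw [abs_neg, abs_of_nonneg (by positivity)]
    nlinarith [abs_nonneg t, sq_abs t, abs_lt.mp ht]
  have h := binomial_tsum α hx
  have h1 : (1 + -(4*t^2) : ℝ) = 1 - 4*t^2 := by ring
  rw [h1] at h
  unfold wf
  rw [← h]
  apply tsum_congr
  intro k
  have : (-(4*t^2) : ℝ)^k = (-1)^k * (2*t)^(2*k) := by
    rw [pow_mul]
    rw [← neg_one_mul, mul_pow]
    congr 2
    ring
  rw [this]
  ring

lemma summable_w_series (α : ℝ) {t : ℝ} (ht : |t| < 1/2) :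
    Summable (fun k : ℕ => genBinom α k * (-1)^k * (2*t)^(2*k)) := by
  apply Summable.of_abs
  apply (summable_coeff α 0 (by positivity : (0:ℝ) ≤ (2*|t|)^2)
    (by nlinarith [abs_nonneg t, abs_lt.mp ht] : (2*|t|)^2 < 1)).of_nonneg_of_le
    (fun k => abs_nonneg _)
  intro k
  rw [abs_mul, abs_mul, abs_pow, abs_pow, abs_neg, abs_one, one_pow, mul_one, pow_zero, mul_one,
    abs_mul, pow_mul]
  apply mul_le_mul_of_nonneg_left _ (abs_nonneg _)
  apply le_of_eq
  congr 1
  rw [abs_of_nonneg (by norm_num : (0:ℝ) ≤ 2)]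

/-- integrability of the weight on `[-1/2, 1/2]`. -/
lemma w_integrable_right (α : ℝ) (hα : -1 < α) :
    IntervalIntegrable (wf α) volume 0 (1/2) := by
  have h1 : IntervalIntegrable (fun x : ℝ => x ^ α) volume 0 1 :=
    intervalIntegral.intervalIntegrable_rpow' hα
  have h2 := h1.comp_sub_left 1
  have h3 := (h2.comp_mul_left (c := 2)).symm
  norm_num at h3
  -- h3 : IntervalIntegrable (fun x => (1 - 2*x) ^ α) volume 0 (1/2) (after norm_num on bounds)
  have h4 : ContinuousOn (fun x : ℝ => (1+2*x)^α) (Set.uIcc (0:ℝ) (1/2)) := by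
    apply ContinuousOn.rpow_const
    · exact (continuous_const.add (continuous_const.mul continuous_id)).continuousOn
    · intro x hx
      rw [Set.uIcc_of_le (by norm_num : (0:ℝ) ≤ 1/2)] at hx
      left
      have := hx.1
      positivity
  have h5 := h3.continuousOn_mul h4
  apply h5.congr
  intro x hx
  rw [Set.uIoc_of_le (by norm_num : (0:ℝ) ≤ 1/2)] at hx
  have hx1 : (0:ℝ) ≤ 1 + 2*x := by nlinarith [hx.1, hx.2]
  have hx2 : (0:ℝ) ≤ 1 - 2*x := by nlinarith [hx.2]
  show (1+2*x)^α * (1-2*x)^α = wf α x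
  rw [← Real.mul_rpow hx1 hx2]
  unfold wf
  congr 1
  ring

lemma w_integrable (α : ℝ) (hα : -1 < α) :
    IntervalIntegrable (wf α) volume (-(1:ℝ)/2) (1/2) := by
  have hr := w_integrable_right α hα
  have hl0 := (IntervalIntegrable.iff_comp_neg (f := wf α) (a := 0) (b := 1/2) (by finiteness)).mp hr
  rw [neg_zero] at hl0
  have hl1 : IntervalIntegrable (wf α) volume 0 (-(1/2)) :=
    hl0.congr (fun x _ => wf_even α x)
  have hl : IntervalIntegrable (wf α) volume (-(1:ℝ)/2) 0 := by
    have h := hl1.symm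
    have : (-(1:ℝ)/2) = -(1/2) := by norm_num
    rwa [this]
  exact hl.trans hr

lemma w_integrable_sub (α : ℝ) (hα : -1 < α) {a b : ℝ}
    (ha : a ∈ Set.Icc (-(1:ℝ)/2) (1/2)) (hb : b ∈ Set.Icc (-(1:ℝ)/2) (1/2)) :
    IntervalIntegrable (wf α) volume a b := by
  apply (w_integrable α hα).mono_set
  rw [Set.uIcc_of_le (by norm_num : (-(1:ℝ)/2) ≤ 1/2)]
  apply Set.uIcc_subset_Icc ha hb

lemma gf_continuousOn (α : ℝ) (hα : -1 < α) :
    ContinuousOn (gf α) (Set.Icc (-(1:ℝ)/2) (1/2)) := by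
  have h := intervalIntegral.continuousOn_primitive_interval' (f := wf α) (a := 0)
    (w_integrable α hα)
    (by rw [Set.uIcc_of_le (by norm_num : (-(1:ℝ)/2) ≤ 1/2)]; constructor <;> norm_num)
  rw [Set.uIcc_of_le (by norm_num : (-(1:ℝ)/2) ≤ 1/2)] at h
  exact h

lemma w_continuousAt (α : ℝ) {y : ℝ} (hy : |y| < 1/2) : ContinuousAt (wf α) y := by
  have hpos : 0 < 1 - 4*y^2 := by nlinarith [abs_lt.mp hy]
  apply ContinuousAt.rpow_const
  · exact (continuous_const.sub (continuous_const.mul (continuous_pow 2))).continuousAt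
  · exact Or.inl (ne_of_gt hpos)

lemma gf_hasDerivAt (α : ℝ) (hα : -1 < α) {y : ℝ} (hy : |y| < 1/2) :
    HasDerivAt (gf α) (wf α y) y := by
  apply intervalIntegral.integral_hasDerivAt_right
  · apply w_integrable_sub α hα
    · constructor <;> norm_num
    · have := abs_lt.mp hy; constructor <;> [linarith; linarith]
  · exact ContinuousAt.stronglyMeasurableAtFilter (isOpen_Ioo (a := -(1/2:ℝ)) (b := (1/2:ℝ)))
      (fun x hx => w_continuousAt α (by rw [abs_lt]; exact ⟨by linarith [hx.1], hx.2⟩))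
      y (by have := abs_lt.mp hy; exact ⟨by linarith, this.2⟩)
  · exact w_continuousAt α hy

lemma gf_odd (α : ℝ) (t : ℝ) : gf α (-t) = - gf α t := by
  have h1 : (∫ u in (0:ℝ)..t, wf α (-u)) = ∫ u in (-t)..(-(0:ℝ)), wf α u :=
    intervalIntegral.integral_comp_neg (fun u => wf α u)
  rw [neg_zero] at h1
  have h2 : (∫ u in (0:ℝ)..t, wf α (-u)) = ∫ u in (0:ℝ)..t, wf α u :=
    intervalIntegral.integral_congr (fun x _ => wf_even α x)
  calc gf α (-t) = ∫ u in (0:ℝ)..(-t), wf α u := rfl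
    _ = -∫ u in (-t)..(0:ℝ), wf α u := intervalIntegral.integral_symm (-t) 0
    _ = -∫ u in (0:ℝ)..t, wf α (-u) := by rw [h1]
    _ = -∫ u in (0:ℝ)..t, wf α u := by rw [h2]
    _ = - gf α t := rfl
/-! ### The series `S` and its identification with `2 g` -/

noncomputable def Sf (α : ℝ) (t : ℝ) : ℝ :=
  ∑' k : ℕ, genBinom α k * (-1) ^ k * (2 * t) ^ (2 * k + 1) / (2 * k + 1)

lemma phiPlus_eq (α t : ℝ) : phiPlus α t =
    1/2 + (Real.Gamma (α + 3/2) / (Real.sqrt Real.pi * Real.Gamma (α + 1))) * Sf α t := rfl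

lemma Sf_term_zero (α : ℝ) (k : ℕ) :
    genBinom α k * (-1) ^ k * (2 * (0:ℝ)) ^ (2 * k + 1) / (2 * k + 1) = 0 := by
  rw [mul_zero, zero_pow (by omega : 2*k+1 ≠ 0)]
  simp

lemma Sf_hasDerivAt (α : ℝ) {y : ℝ} (hy : |y| < 1/2) :
    HasDerivAt (Sf α) (2 * wf α y) y := by
  set r : ℝ := (|y| + 1/2)/2 with hrdef
  have hy0 := abs_nonneg y
  have hr0 : 0 < r := by rw [hrdef]; positivity
  have hyr : |y| < r := by rw [hrdef]; linarith
  have hr1 : r < 1/2 := by rw [hrdef]; linarith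
  have h2r : (2*r)^2 < 1 := by nlinarith
  have hkey : HasDerivAt (Sf α)
      (∑' k : ℕ, 2 * (genBinom α k * (-1)^k * (2*y)^(2*k))) y := by
    unfold Sf
    apply hasDerivAt_tsum_of_isPreconnected
      (g' := fun (k : ℕ) (x : ℝ) => 2 * (genBinom α k * (-1)^k * (2*x)^(2*k)))
      (u := fun k : ℕ => 2 * (|genBinom α k| * ((2*r)^2)^k))
      (t := Set.Ioo (-r) r) (y₀ := 0)
    · apply Summable.mul_left
      have h := summable_coeff α 0 (by positivity : (0:ℝ) ≤ (2*r)^2) h2r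
      apply h.congr
      intro k
      rw [pow_zero, mul_one]
    · exact isOpen_Ioo
    · exact (convex_Ioo _ _).isPreconnected
    · intro k z hz
      have hin : HasDerivAt (fun t : ℝ => 2*t) 2 z := by
        simpa using (hasDerivAt_id z).const_mul 2
      have hp := (hasDerivAt_pow (2*k+1) (2*z)).comp z hin
      have h1 := (hp.div_const ((2*k:ℝ)+1)).const_mul (genBinom α k * (-1)^k)
      refine HasDerivAt.congr_deriv (HasDerivAt.congr_of_eventuallyEq h1
        (Filter.Eventually.of_forall fun t => ?_)) ?_
      · simp only [Function.comp_apply]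
        push_cast
        ring
      · have hne : ((2*k:ℝ)+1) ≠ 0 := by positivity
        rw [Nat.add_sub_cancel]
        push_cast
        field_simp
    · intro k z hz
      have hz' : |z| ≤ r := by rw [abs_le]; exact ⟨le_of_lt hz.1, le_of_lt hz.2⟩
      rw [Real.norm_eq_abs, abs_mul, abs_mul, abs_mul, abs_pow, abs_pow, abs_neg, abs_one,
        one_pow, mul_one, abs_of_nonneg (by norm_num : (0:ℝ) ≤ 2), abs_mul,
        abs_of_nonneg (by norm_num : (0:ℝ) ≤ 2)]
      have h1 : (2*|z|)^(2*k) ≤ (2*r)^(2*k) := by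
        apply pow_le_pow_left₀ (by positivity)
        linarith
      have h2 : (2*r)^(2*k) = ((2*r)^2)^k := by rw [← pow_mul]
      apply mul_le_mul_of_nonneg_left _ (by norm_num : (0:ℝ) ≤ 2)
      calc |genBinom α k| * (2*|z|)^(2*k) ≤ |genBinom α k| * (2*r)^(2*k) :=
            mul_le_mul_of_nonneg_left h1 (abs_nonneg _)
        _ = |genBinom α k| * ((2*r)^2)^k := by rw [h2]
    · exact ⟨by linarith, by linarith⟩
    · apply summable_of_ne_finset_zero (s := (∅ : Finset ℕ))
      intro k _
      exact Sf_term_zero α k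
    · exact ⟨neg_lt_of_abs_lt hyr, lt_of_abs_lt hyr⟩
  have heq : (∑' k : ℕ, 2 * (genBinom α k * (-1)^k * (2*y)^(2*k))) = 2 * wf α y := by
    rw [tsum_mul_left, w_tsum α hy]
  rwa [heq] at hkey

lemma Sf_zero (α : ℝ) : Sf α 0 = 0 := by
  unfold Sf
  rw [tsum_congr (Sf_term_zero α)]
  exact tsum_zero

lemma gf_zero (α : ℝ) : gf α 0 = 0 := intervalIntegral.integral_same

lemma Sf_eq_two_gf (α : ℝ) (hα : -1 < α) {t : ℝ} (ht : |t| < 1/2) :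
    Sf α t = 2 * gf α t := by
  have hder : ∀ y ∈ Set.Ioo (-(1/2):ℝ) (1/2),
      HasDerivAt (fun z => Sf α z - 2 * gf α z) 0 y := by
    intro y hy
    have hy' : |y| < 1/2 := abs_lt.mpr ⟨by linarith [hy.1], hy.2⟩
    have h1 := Sf_hasDerivAt α hy'
    have h2 := (gf_hasDerivAt α hα hy').const_mul 2
    have h3 := h1.sub h2
    simp at h3
    exact h3
  have hc := const_of_deriv_zero (by norm_num : (0:ℝ) < 1/2) hder ht
  simp only [Sf_zero, gf_zero, mul_zero, sub_zero] at hc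
  linarith [hc]
/-! ### The Beta integral evaluation -/

lemma beta_integral_real (β : ℝ) (hβ : -1 < β) :
    ∫ u in (0:ℝ)..1, u^β * (1-u)^β
      = Real.Gamma (β+1)^2 / Real.Gamma (2*β+2) := by
  have hre : 0 < ((β:ℂ)+1).re := by
    simp only [Complex.add_re, Complex.ofReal_re, Complex.one_re]
    linarith
  have h := Complex.Gamma_mul_Gamma_eq_betaIntegral hre hre
  rw [Complex.betaIntegral] at h
  have hint : (∫ x : ℝ in (0:ℝ)..1, (x:ℂ)^((β:ℂ)+1-1) * (1-(x:ℂ))^((β:ℂ)+1-1))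
      = ((∫ x in (0:ℝ)..1, x^β * (1-x)^β : ℝ) : ℂ) := by
    rw [← intervalIntegral.integral_ofReal]
    apply intervalIntegral.integral_congr
    intro x hx
    rw [Set.uIcc_of_le (by norm_num : (0:ℝ) ≤ 1)] at hx
    have hx0 : (0:ℝ) ≤ x := hx.1
    have hx1 : (0:ℝ) ≤ 1 - x := by linarith [hx.2]
    have e1 : ((β:ℂ)+1-1) = (β:ℂ) := by ring
    dsimp only
    rw [e1]
    rw [Complex.ofReal_mul, Complex.ofReal_cpow hx0 β, Complex.ofReal_cpow hx1 β]
    push_cast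
    ring
  rw [hint] at h
  have hG1 : Complex.Gamma ((β:ℂ)+1) = (Real.Gamma (β+1) : ℂ) := by
    rw [← Complex.Gamma_ofReal]
    push_cast
    ring_nf
  have hG2 : Complex.Gamma ((β:ℂ)+1+((β:ℂ)+1)) = (Real.Gamma (2*β+2) : ℂ) := by
    rw [← Complex.Gamma_ofReal]
    push_cast
    ring_nf
  rw [hG1, hG2] at h
  have h' : Real.Gamma (β+1) * Real.Gamma (β+1)
      = Real.Gamma (2*β+2) * ∫ x in (0:ℝ)..1, x^β * (1-x)^β := by
    have := h
    rw [← Complex.ofReal_mul, ← Complex.ofReal_mul] at this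
    exact_mod_cast this
  have hpos : 0 < Real.Gamma (2*β+2) := Real.Gamma_pos_of_pos (by linarith)
  rw [eq_div_iff (ne_of_gt hpos), sq]
  linarith [h']

lemma rpow_four (β : ℝ) : (4:ℝ)^β = (2:ℝ)^(2*β) := by
  have h4 : (4:ℝ) = (2:ℝ)^(2:ℝ) := by
    rw [show ((2:ℝ):ℝ) = ((2:ℕ):ℝ) by norm_num, Real.rpow_natCast]
    norm_num
  rw [h4, ← Real.rpow_mul (by norm_num : (0:ℝ) ≤ 2)]

lemma Ibeta (β : ℝ) (hβ : -1 < β) :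
    ∫ t in (-(1:ℝ)/2)..(1/2), wf β t
      = Real.sqrt Real.pi * Real.Gamma (β+1) / (2 * Real.Gamma (β+3/2)) := by
  -- shift of variable
  have hshift := intervalIntegral.integral_comp_sub_right (a := (0:ℝ)) (b := 1)
    (fun t => wf β t) (1/2)
  rw [show ((0:ℝ)-1/2) = -(1:ℝ)/2 by norm_num, show ((1:ℝ)-1/2) = (1/2:ℝ) by norm_num] at hshift
  have hcongr : (∫ u in (0:ℝ)..1, wf β (u - 1/2))
      = ∫ u in (0:ℝ)..1, (4:ℝ)^β * (u^β * (1-u)^β) := by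
    apply intervalIntegral.integral_congr
    intro u hu
    rw [Set.uIcc_of_le (by norm_num : (0:ℝ) ≤ 1)] at hu
    have hu0 : (0:ℝ) ≤ u := hu.1
    have hu1 : (0:ℝ) ≤ 1 - u := by linarith [hu.2]
    show wf β (u - 1/2) = _
    unfold wf
    have e1 : (1 - 4*(u-1/2)^2) = 4*(u*(1-u)) := by ring
    rw [e1, Real.mul_rpow (by norm_num : (0:ℝ) ≤ 4) (by positivity),
      Real.mul_rpow hu0 hu1]
  have hval : (∫ u in (0:ℝ)..1, (4:ℝ)^β * (u^β * (1-u)^β))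
      = (4:ℝ)^β * (Real.Gamma (β+1)^2 / Real.Gamma (2*β+2)) := by
    rw [intervalIntegral.integral_const_mul, beta_integral_real β hβ]
  -- duplication formula
  have hdup := Real.Gamma_mul_Gamma_add_half (β+1)
  have e2 : (β+1+1/2 : ℝ) = β+3/2 := by ring
  rw [e2] at hdup
  -- hdup : Γ(β+1) * Γ(β+3/2) = Γ(2*(β+1)) * 2^(1-2*(β+1)) * √π
  have hG1 : 0 < Real.Gamma (β+1) := Real.Gamma_pos_of_pos (by linarith)
  have hG2 : 0 < Real.Gamma (β+3/2) := Real.Gamma_pos_of_pos (by linarith)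
  have hG3 : 0 < Real.Gamma (2*β+2) := Real.Gamma_pos_of_pos (by linarith)
  have hsπ : 0 < Real.sqrt Real.pi := Real.sqrt_pos.mpr Real.pi_pos
  have hpow : (0:ℝ) < (2:ℝ)^(1-2*(β+1)) := Real.rpow_pos_of_pos (by norm_num) _
  have e3 : (2*(β+1) : ℝ) = 2*β+2 := by ring
  have hdup' : Real.Gamma (β+1) * Real.Gamma (β+3/2)
      = Real.Gamma (2*β+2) * (2:ℝ)^(1-2*(β+1)) * Real.sqrt Real.pi := by
    rw [← e3]; exact hdup
  have hrw : (2:ℝ)^(2*β) * (2:ℝ)^(1-2*(β+1)) * 2 = 1 := by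
    rw [← Real.rpow_add (by norm_num : (0:ℝ) < 2),
      show (2*β + (1-2*(β+1)) : ℝ) = -1 by ring, Real.rpow_neg_one]
    norm_num
  have key : (4:ℝ)^β * (Real.Gamma (β+1)^2 / Real.Gamma (2*β+2))
      = Real.sqrt Real.pi * Real.Gamma (β+1) / (2 * Real.Gamma (β+3/2)) := by
    rw [rpow_four, ← mul_div_assoc]
    rw [div_eq_div_iff (ne_of_gt hG3) (by positivity : (2 * Real.Gamma (β+3/2)) ≠ 0)]
    linear_combination (2*(2:ℝ)^(2*β)*Real.Gamma (β+1)) * hdup'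
      + (Real.sqrt Real.pi * Real.Gamma (β+1) * Real.Gamma (2*β+2)) * hrw
  rw [← hshift, hcongr, hval, key]
lemma final_alg (P G1 G2 G3 G4 a : ℝ) (hP : P ≠ 0) (h1 : G1 ≠ 0) (h2 : G2 ≠ 0)
    (h4 : G4 ≠ 0) (ha : a ≠ 0) :
    ((1:ℝ)/2 - -1/2) • ((1:ℝ)/4) +
      (2*(G2/(P*G1))*0 + 4*(G2/(P*G1))^2 *
        ((P*G1/(2*G2)/2)^2 - 2*(1/(8*a)*(P*G3/(2*G4))))) =
    1/2*(1 - G3*G2^2/(G4*G1*(a*G1)*P)) := by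
  rw [smul_eq_mul]
  field_simp
  ring

end S11

open S11 in
set_option maxHeartbeats 1000000 in
theorem stmt11 (α : ℝ) (hα : α > -1/2) :
    (∫ t in (-(1:ℝ)/2)..(1/2), (phiPlus α t) ^ 2) =
      (1/2) * (1 - Real.Gamma (2 * α + 2) * Real.Gamma (α + 3/2) ^ 2 /
        (Real.Gamma (2 * α + 5/2) * Real.Gamma (α + 1) * Real.Gamma (α + 2) *
          Real.sqrt Real.pi)) := by
  have hα1 : (-1:ℝ) < α := by linarith
  have hab : (-(1:ℝ)/2) ≤ 1/2 := by norm_num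
  set K : ℝ := Real.Gamma (α + 3/2) / (Real.sqrt Real.pi * Real.Gamma (α + 1)) with hK
  have hgc : ContinuousOn (gf α) (Set.uIcc (-(1:ℝ)/2) (1/2)) := by
    rw [Set.uIcc_of_le hab]; exact gf_continuousOn α hα1
  have hgcIcc : ContinuousOn (gf α) (Set.Icc (-(1:ℝ)/2) (1/2)) := gf_continuousOn α hα1
  -- step 1 : replace the integrand a.e.
  have h1 : (∫ t in (-(1:ℝ)/2)..(1/2), (phiPlus α t)^2)
      = ∫ t in (-(1:ℝ)/2)..(1/2), (1/2 + 2*K*gf α t)^2 := by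
    apply intervalIntegral.integral_congr_ae
    have hne : ∀ᵐ x : ℝ, x ∈ ({(1/2:ℝ)} : Set ℝ)ᶜ :=
      MeasureTheory.compl_mem_ae_iff.mpr (MeasureTheory.measure_singleton _)
    filter_upwards [hne] with x hx hxI
    rw [Set.uIoc_of_le hab] at hxI
    have hxne : x ≠ (1/2:ℝ) := hx
    have hx2 : |x| < 1/2 := by
      rw [abs_lt]
      refine ⟨by linarith [hxI.1], lt_of_le_of_ne hxI.2 hxne⟩
    rw [phiPlus_eq, Sf_eq_two_gf α hα1 hx2]
    ring
  rw [h1]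
  -- integrability facts
  have hIg : IntervalIntegrable (gf α) MeasureTheory.volume (-(1:ℝ)/2) (1/2) :=
    hgc.intervalIntegrable
  have hIg2 : IntervalIntegrable (fun t => (gf α t)^2) MeasureTheory.volume (-(1:ℝ)/2) (1/2) :=
    (hgc.pow 2).intervalIntegrable
  have hIw : IntervalIntegrable (wf α) MeasureTheory.volume (-(1:ℝ)/2) (1/2) := w_integrable α hα1
  have hctid : ContinuousOn (fun t : ℝ => t * gf α t) (Set.uIcc (-(1:ℝ)/2) (1/2)) :=
    continuousOn_id.mul hgc
  have hItgw : IntervalIntegrable (fun t => t * gf α t * wf α t)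
      MeasureTheory.volume (-(1:ℝ)/2) (1/2) := hIw.continuousOn_mul hctid
  have hw2cont : ContinuousOn (fun t : ℝ => (1-4*t^2)^(2*α+1)) (Set.uIcc (-(1:ℝ)/2) (1/2)) := by
    apply ContinuousOn.rpow_const
    · exact (continuous_const.sub (continuous_const.mul (continuous_pow 2))).continuousOn
    · intro x _
      right; linarith
  have hIw2 : IntervalIntegrable (fun t : ℝ => (1-4*t^2)^(2*α+1))
      MeasureTheory.volume (-(1:ℝ)/2) (1/2) := hw2cont.intervalIntegrable
  -- step 3 : ∫ g = 0
  have hg0 : (∫ t in (-(1:ℝ)/2)..(1/2), gf α t) = 0 := by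
    have him : Set.uIcc (0:ℝ) (1/2) ⊆ Set.uIcc (-(1:ℝ)/2) (1/2) := by
      rw [Set.uIcc_of_le hab, Set.uIcc_of_le (by norm_num : (0:ℝ) ≤ 1/2)]
      apply Set.Icc_subset_Icc (by norm_num) (le_refl _)
    have him2 : Set.uIcc (-(1:ℝ)/2) (0:ℝ) ⊆ Set.uIcc (-(1:ℝ)/2) (1/2) := by
      rw [Set.uIcc_of_le hab, Set.uIcc_of_le (by norm_num : (-(1:ℝ)/2) ≤ 0)]
      apply Set.Icc_subset_Icc (le_refl _) (by norm_num)
    have hsplit := intervalIntegral.integral_add_adjacent_intervals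
      (a := (-(1:ℝ)/2)) (b := 0) (c := 1/2) (f := gf α)
      (hIg.mono_set him2) (hIg.mono_set him)
    have h1' : (∫ x in (0:ℝ)..(1/2), gf α (-x)) = ∫ x in (-(1/2):ℝ)..(-(0:ℝ)), gf α x :=
      intervalIntegral.integral_comp_neg (fun x => gf α x)
    rw [neg_zero] at h1'
    have h2' : (∫ x in (0:ℝ)..(1/2), gf α (-x)) = ∫ x in (0:ℝ)..(1/2), -gf α x :=
      intervalIntegral.integral_congr (fun x _ => gf_odd α x)
    rw [intervalIntegral.integral_neg] at h2'
    have hneg : (∫ t in (-(1:ℝ)/2)..(0:ℝ), gf α t) = - ∫ t in (0:ℝ)..(1/2), gf α t := by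
      rw [show (-(1:ℝ)/2) = (-(1/2):ℝ) by norm_num, ← h1', h2']
    rw [← hsplit, hneg]
    ring
  -- step 4 : first integration by parts
  have hFTC1 : (∫ t in (-(1:ℝ)/2)..(1/2), ((gf α t)^2 + 2*(t * gf α t * wf α t)))
      = (gf α (1/2))^2 := by
    have hder : ∀ x ∈ Set.Ioo (-(1:ℝ)/2) (1/2),
        HasDerivWithinAt (fun t => t * (gf α t)^2)
          ((gf α x)^2 + 2*(x * gf α x * wf α x)) (Set.Ioi x) x := by
      intro x hx
      have hx2 : |x| < 1/2 := by rw [abs_lt]; exact ⟨by linarith [hx.1], hx.2⟩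
      have hgd := gf_hasDerivAt α hα1 hx2
      have h := (hasDerivAt_id x).mul (hgd.pow 2)
      have h' : HasDerivAt (fun t => t * (gf α t)^2)
          ((gf α x)^2 + 2*(x * gf α x * wf α x)) x := by
        refine h.congr_deriv ?_
        simp only [id_eq, Nat.cast_ofNat, pow_one]
        norm_num
        ring
      exact h'.hasDerivWithinAt
    have := intervalIntegral.integral_eq_sub_of_hasDeriv_right_of_le hab
      (continuousOn_id.mul (hgcIcc.pow 2)) hder
      (hIg2.add (hItgw.const_mul 2))
    rw [this]
    have hval : gf α (-(1:ℝ)/2) = - gf α (1/2) := by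
      rw [show (-(1:ℝ)/2) = -(1/2:ℝ) by norm_num]
      exact gf_odd α (1/2)
    show (1/2:ℝ) * gf α (1/2) ^ 2 - (-(1:ℝ)/2) * gf α (-(1:ℝ)/2) ^ 2 = gf α (1/2) ^ 2
    rw [hval]
    ring
  -- step 5 : second integration by parts
  have hα1' : α + 1 ≠ 0 := by linarith
  have hFTC2 : (∫ t in (-(1:ℝ)/2)..(1/2),
        (t * gf α t * wf α t - (1/(8*(α+1))) * (1-4*t^2)^(2*α+1))) = 0 := by
    have hrp : ContinuousOn (fun t : ℝ => (1-4*t^2)^(α+1)) (Set.Icc (-(1:ℝ)/2) (1/2)) := by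
      apply ContinuousOn.rpow_const
      · exact (continuous_const.sub (continuous_const.mul (continuous_pow 2))).continuousOn
      · intro x _; right; linarith
    have hcF : ContinuousOn (fun t : ℝ => (-(1:ℝ)/(8*(α+1))) * (1-4*t^2)^(α+1) * gf α t)
        (Set.Icc (-(1:ℝ)/2) (1/2)) := (continuousOn_const.mul hrp).mul hgcIcc
    have hder : ∀ x ∈ Set.Ioo (-(1:ℝ)/2) (1/2),
        HasDerivWithinAt (fun t : ℝ => (-(1:ℝ)/(8*(α+1))) * (1-4*t^2)^(α+1) * gf α t)
          (x * gf α x * wf α x - (1/(8*(α+1))) * (1-4*x^2)^(2*α+1)) (Set.Ioi x) x := by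
      intro x hx
      have hx2 : |x| < 1/2 := by rw [abs_lt]; exact ⟨by linarith [hx.1], hx.2⟩
      have hbpos : 0 < 1 - 4*x^2 := by nlinarith [abs_lt.mp hx2]
      have hgd := gf_hasDerivAt α hα1 hx2
      have hbase : HasDerivAt (fun t : ℝ => 1 - 4*t^2) (-(8*x)) x := by
        have h := ((hasDerivAt_pow 2 x).const_mul 4).const_sub 1
        refine h.congr_deriv ?_
        norm_num
        ring
      have hB : HasDerivAt (fun t : ℝ => (1-4*t^2)^(α+1))
          ((-(8*x)) * (α+1) * (1-4*x^2)^(α+1-1)) x :=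
        hbase.rpow_const (Or.inl (ne_of_gt hbpos))
      have hBC := (HasDerivAt.const_mul (-(1:ℝ)/(8*(α+1))) hB).mul hgd
      have hexp : (1-4*x^2:ℝ)^(α+1-1) = (1-4*x^2)^α := by norm_num
      have hprod : (1-4*x^2:ℝ)^(α+1) * (1-4*x^2)^α = (1-4*x^2)^(2*α+1) := by
        rw [← Real.rpow_add hbpos]
        norm_num
        ring_nf
      have he : (-(1:ℝ)/(8*(α+1))) * ((-(8*x)) * (α+1) * (1-4*x^2)^(α+1-1)) * gf α x
            + (-(1:ℝ)/(8*(α+1))) * (1-4*x^2)^(α+1) * wf α x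
          = x * gf α x * wf α x - (1/(8*(α+1))) * (1-4*x^2)^(2*α+1) := by
        rw [hexp]
        unfold wf
        rw [show (-(1:ℝ)/(8*(α+1))) * (1-4*x^2)^(α+1) * (1-4*x^2)^α
            = (-(1:ℝ)/(8*(α+1))) * (1-4*x^2)^(2*α+1) by rw [mul_assoc, hprod]]
        field_simp
        ring
      rw [he] at hBC
      exact hBC.hasDerivWithinAt
    have := intervalIntegral.integral_eq_sub_of_hasDeriv_right_of_le hab hcF hder
      (hItgw.sub (hIw2.const_mul (1/(8*(α+1)))))
    rw [this]
    have hz : (1 - 4*((1:ℝ)/2)^2) = 0 := by norm_num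
    have hz2 : (1 - 4*(-(1:ℝ)/2)^2) = 0 := by norm_num
    rw [hz, hz2, Real.zero_rpow hα1']
    ring
  -- step 6 : value of ∫ w  and ∫ w over halves
  have hIαsym : (∫ t in (-(1:ℝ)/2)..(1/2), wf α t) = 2 * gf α (1/2) := by
    have him : Set.uIcc (0:ℝ) (1/2) ⊆ Set.uIcc (-(1:ℝ)/2) (1/2) := by
      rw [Set.uIcc_of_le hab, Set.uIcc_of_le (by norm_num : (0:ℝ) ≤ 1/2)]
      apply Set.Icc_subset_Icc (by norm_num) (le_refl _)
    have him2 : Set.uIcc (-(1:ℝ)/2) (0:ℝ) ⊆ Set.uIcc (-(1:ℝ)/2) (1/2) := by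
      rw [Set.uIcc_of_le hab, Set.uIcc_of_le (by norm_num : (-(1:ℝ)/2) ≤ 0)]
      apply Set.Icc_subset_Icc (le_refl _) (by norm_num)
    have hsplit := intervalIntegral.integral_add_adjacent_intervals
      (a := (-(1:ℝ)/2)) (b := 0) (c := 1/2) (f := wf α)
      (hIw.mono_set him2) (hIw.mono_set him)
    have h1' : (∫ x in (0:ℝ)..(1/2), wf α (-x)) = ∫ x in (-(1/2):ℝ)..(-(0:ℝ)), wf α x :=
      intervalIntegral.integral_comp_neg (fun x => wf α x)
    rw [neg_zero] at h1'
    have h2' : (∫ x in (0:ℝ)..(1/2), wf α (-x)) = ∫ x in (0:ℝ)..(1/2), wf α x :=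
      intervalIntegral.integral_congr (fun x _ => wf_even α x)
    have hneg : (∫ t in (-(1:ℝ)/2)..(0:ℝ), wf α t) = ∫ t in (0:ℝ)..(1/2), wf α t := by
      rw [show (-(1:ℝ)/2) = (-(1/2):ℝ) by norm_num, ← h1', h2']
    have hgf : gf α (1/2) = ∫ t in (0:ℝ)..(1/2), wf α t := rfl
    rw [← hsplit, hneg, hgf]
    ring
  -- step 7 : assemble
  have hexp : (∫ t in (-(1:ℝ)/2)..(1/2), (1/2 + 2*K*gf α t)^2)
      = (∫ t in (-(1:ℝ)/2)..(1/2), ((1/4 : ℝ) + ((2*K) * gf α t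
          + (4*K^2) * (gf α t)^2))) := by
    apply intervalIntegral.integral_congr
    intro t _
    ring
  rw [hexp]
  rw [intervalIntegral.integral_add intervalIntegrable_const
    ((hIg.const_mul (2*K)).add (hIg2.const_mul (4*K^2)))]
  rw [intervalIntegral.integral_add (hIg.const_mul (2*K)) (hIg2.const_mul (4*K^2))]
  rw [intervalIntegral.integral_const_mul, intervalIntegral.integral_const_mul,
    intervalIntegral.integral_const, hg0]
  -- value of ∫ g²
  have hsplitgw : (∫ t in (-(1:ℝ)/2)..(1/2), ((gf α t)^2 + 2*(t * gf α t * wf α t)))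
      = (∫ t in (-(1:ℝ)/2)..(1/2), (gf α t)^2)
        + 2 * ∫ t in (-(1:ℝ)/2)..(1/2), (t * gf α t * wf α t) := by
    rw [intervalIntegral.integral_add hIg2 (hItgw.const_mul 2),
      intervalIntegral.integral_const_mul]
  have hA : (∫ t in (-(1:ℝ)/2)..(1/2), (t * gf α t * wf α t))
      = (1/(8*(α+1))) * ∫ t in (-(1:ℝ)/2)..(1/2), (1-4*t^2)^(2*α+1) := by
    have hs := intervalIntegral.integral_sub hItgw (hIw2.const_mul (1/(8*(α+1))))
    rw [intervalIntegral.integral_const_mul] at hs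
    rw [hFTC2] at hs
    linarith [hs]
  have hg2val : (∫ t in (-(1:ℝ)/2)..(1/2), (gf α t)^2)
      = (gf α (1/2))^2 - 2 * ((1/(8*(α+1))) * ∫ t in (-(1:ℝ)/2)..(1/2), (1-4*t^2)^(2*α+1)) := by
    rw [← hA]
    have := hsplitgw
    rw [hFTC1] at this
    linarith [this]
  rw [hg2val]
  -- Gamma values
  have hIαval := Ibeta α hα1
  have hI2val := Ibeta (2*α+1) (by linarith)
  rw [show (2*α+1+1 : ℝ) = 2*α+2 by ring, show (2*α+1+3/2 : ℝ) = 2*α+5/2 by ring] at hI2val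
  have hwf2 : (∫ t in (-(1:ℝ)/2)..(1/2), (1-4*t^2)^(2*α+1))
      = ∫ t in (-(1:ℝ)/2)..(1/2), wf (2*α+1) t := rfl
  rw [hwf2, hI2val]
  have hgfval : gf α (1/2)
      = (Real.sqrt Real.pi * Real.Gamma (α+1) / (2 * Real.Gamma (α+3/2))) / 2 := by
    have := hIαsym
    rw [hIαval] at this
    linarith [this]
  rw [hgfval]
  -- final rational-function algebra
  have hG1 : 0 < Real.Gamma (α+1) := Real.Gamma_pos_of_pos (by linarith)
  have hG2 : 0 < Real.Gamma (α+3/2) := Real.Gamma_pos_of_pos (by linarith)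
  have hG3 : 0 < Real.Gamma (2*α+2) := Real.Gamma_pos_of_pos (by linarith)
  have hG4 : 0 < Real.Gamma (2*α+5/2) := Real.Gamma_pos_of_pos (by linarith)
  have hsπ : 0 < Real.sqrt Real.pi := Real.sqrt_pos.mpr Real.pi_pos
  have hΓ2 : Real.Gamma (α+2) = (α+1) * Real.Gamma (α+1) := by
    rw [show (α+2 : ℝ) = (α+1)+1 by ring, Real.Gamma_add_one hα1']
  rw [hΓ2, hK]
  have hαpos : (0:ℝ) < α + 1 := by linarith
  exact final_alg (Real.sqrt Real.pi) (Real.Gamma (α+1)) (Real.Gamma (α+3/2))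
    (Real.Gamma (2*α+2)) (Real.Gamma (2*α+5/2)) (α+1)
    (ne_of_gt hsπ) (ne_of_gt hG1) (ne_of_gt hG2) (ne_of_gt hG4) hα1'
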